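/- Define D(φ) = sin(β(φ))·e^{−iπ/3}, B(φ) = Re D(φ), C(φ) = −Im D(φ), where β is the regular branch of arccos(1+(cos φ−1)e^{2πi/3}) with β(0)=0. Then as φ → 0⁺, D(φ) = φ + φ³(1/48 − i√3/16) + o(φ³); hence B(φ) = φ + φ³/48 + o(φ³) and C(φ) = (√3/16)φ³ + o(φ³). -/

import Mathlib

open Real Set Filter Topology Asymptotics

set_option maxHeartbeats 800000 in
private lemma D_aux_bound (t φ : ℝ) (hφ0 : 0 < φ) (hφ1 : φ < 1)
    (ht0 : 0 < t) (htu : t ≤ φ/2)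
    (hr : |t - (φ/2 - φ^3/48)| ≤ 5/1536*φ^4) :
    |4*t^2 + 2*t^4 - (φ + φ^3/48)^2 + 3*φ^6/256| ≤ φ^5/2 ∧
    |Real.sqrt 3 * (-2*t^4 + φ^4/8 + φ^6/384)| ≤ φ^5/2 := by
  have hs3 : (0:ℝ) < Real.sqrt 3 := Real.sqrt_pos.mpr (by norm_num)
  have hs3sq : Real.sqrt 3 ^ 2 = 3 := Real.sq_sqrt (by norm_num)
  have hs3le : Real.sqrt 3 ≤ 2 := by nlinarith
  obtain ⟨q, hqdef⟩ : ∃ q, q = φ/2 - φ^3/48 := ⟨_, rfl⟩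
  rw [← hqdef] at hr
  have hφ2le : φ^2 ≤ 1 := by nlinarith
  have hφ3pos : 0 < φ^3 := by positivity
  have hφ3 : φ^3 ≤ φ := by nlinarith
  have hφ5pos : 0 < φ^5 := by positivity
  have hφ6le : φ^6 ≤ φ^5 := by nlinarith [pow_pos hφ0 5]
  have hq0 : 0 ≤ q := by rw [hqdef]; linarith
  have hqle : q ≤ φ/2 := by rw [hqdef]; linarith
  have habs2 : |t^2 - q^2| ≤ 5/1536*φ^5 := by
    have e : t^2 - q^2 = (t - q)*(t + q) := by ring
    rw [e, abs_mul]
    have h1 : |t + q| ≤ φ := by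
      rw [abs_of_nonneg (by linarith)]
      nlinarith [pow_pos hφ0 3]
    calc |t - q| * |t + q| ≤ (5/1536*φ^4) * φ :=
          mul_le_mul hr h1 (abs_nonneg _) (by positivity)
      _ = 5/1536*φ^5 := by ring
  have habs4 : |t^4 - q^4| ≤ 5/3072*φ^5 := by
    have e : t^4 - q^4 = (t^2 - q^2)*(t^2 + q^2) := by ring
    rw [e, abs_mul]
    have h1 : |t^2 + q^2| ≤ 1/2 := by
      rw [abs_of_nonneg (by positivity)]
      nlinarith
    calc |t^2 - q^2| * |t^2 + q^2| ≤ (5/1536*φ^5) * (1/2) :=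
          mul_le_mul habs2 h1 (abs_nonneg _) (by positivity)
      _ = 5/3072*φ^5 := by ring
  have key1 : |(-1/128 + φ^2/768 - φ^4/27648 + φ^6/2654208 : ℝ)| ≤ 1/64 := by
    rw [abs_le]
    constructor <;> linarith [pow_le_one₀ hφ0.le hφ1.le (n := 2),
      pow_le_one₀ hφ0.le hφ1.le (n := 4), pow_le_one₀ hφ0.le hφ1.le (n := 6),
      pow_pos hφ0 2, pow_pos hφ0 4, pow_pos hφ0 6]
  have key2 : |(3/128 - φ^2/768 + φ^4/27648 - φ^6/2654208 : ℝ)| ≤ 1/16 := by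
    rw [abs_le]
    constructor <;> linarith [pow_le_one₀ hφ0.le hφ1.le (n := 2),
      pow_le_one₀ hφ0.le hφ1.le (n := 4), pow_le_one₀ hφ0.le hφ1.le (n := 6),
      pow_pos hφ0 2, pow_pos hφ0 4, pow_pos hφ0 6]
  have hp1 : |4*q^2 + 2*q^4 - (φ + φ^3/48)^2 + 3*φ^6/256| ≤ 1/64*φ^5 := by
    have e : 4*q^2 + 2*q^4 - (φ + φ^3/48)^2 + 3*φ^6/256
        = φ^6*(-1/128 + φ^2/768 - φ^4/27648 + φ^6/2654208) := by rw [hqdef]; ring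
    rw [e, abs_mul, abs_of_nonneg (by positivity : (0:ℝ) ≤ φ^6)]
    calc φ^6 * |(-1/128 + φ^2/768 - φ^4/27648 + φ^6/2654208 : ℝ)| ≤ φ^6 * (1/64) :=
          mul_le_mul_of_nonneg_left key1 (by positivity)
      _ ≤ φ^5 * (1/64) := by linarith
      _ = 1/64*φ^5 := by ring
  have hp2 : |(-2*q^4 + φ^4/8 + φ^6/384 : ℝ)| ≤ 1/16*φ^5 := by
    have e : (-2*q^4 + φ^4/8 + φ^6/384 : ℝ)
        = φ^6*(3/128 - φ^2/768 + φ^4/27648 - φ^6/2654208) := by rw [hqdef]; ring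
    rw [e, abs_mul, abs_of_nonneg (by positivity : (0:ℝ) ≤ φ^6)]
    calc φ^6 * |(3/128 - φ^2/768 + φ^4/27648 - φ^6/2654208 : ℝ)| ≤ φ^6 * (1/16) :=
          mul_le_mul_of_nonneg_left key2 (by positivity)
      _ ≤ φ^5 * (1/16) := by linarith
      _ = 1/16*φ^5 := by ring
  constructor
  · have e : 4*t^2 + 2*t^4 - (φ + φ^3/48)^2 + 3*φ^6/256
        = 4*(t^2 - q^2) + 2*(t^4 - q^4) + (4*q^2 + 2*q^4 - (φ + φ^3/48)^2 + 3*φ^6/256) := by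
      ring
    rw [e]
    calc |4*(t^2 - q^2) + 2*(t^4 - q^4) + (4*q^2 + 2*q^4 - (φ + φ^3/48)^2 + 3*φ^6/256)|
        ≤ |4*(t^2 - q^2)| + |2*(t^4 - q^4)| + |4*q^2 + 2*q^4 - (φ + φ^3/48)^2 + 3*φ^6/256| :=
          abs_add_three _ _ _
      _ ≤ 4*(5/1536*φ^5) + 2*(5/3072*φ^5) + 1/64*φ^5 := by
          rw [abs_mul, abs_mul, show |(4:ℝ)| = 4 by norm_num, show |(2:ℝ)| = 2 by norm_num]
          gcongr
      _ ≤ φ^5/2 := by linarith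
  · rw [abs_mul, abs_of_nonneg hs3.le]
    have e : (-2*t^4 + φ^4/8 + φ^6/384 : ℝ)
        = (-2)*(t^4 - q^4) + (-2*q^4 + φ^4/8 + φ^6/384) := by ring
    have h1 : |(-2*t^4 + φ^4/8 + φ^6/384 : ℝ)| ≤ 2*(5/3072*φ^5) + 1/16*φ^5 := by
      rw [e]
      calc |(-2)*(t^4 - q^4) + (-2*q^4 + φ^4/8 + φ^6/384 : ℝ)|
          ≤ |(-2)*(t^4 - q^4)| + |(-2*q^4 + φ^4/8 + φ^6/384 : ℝ)| := abs_add_le _ _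
        _ ≤ 2*(5/3072*φ^5) + 1/16*φ^5 := by
            rw [abs_mul, show |(-2:ℝ)| = 2 by norm_num]
            gcongr
    calc Real.sqrt 3 * |(-2*t^4 + φ^4/8 + φ^6/384 : ℝ)| ≤ 2 * (2*(5/3072*φ^5) + 1/16*φ^5) :=
          mul_le_mul hs3le h1 (abs_nonneg _) (by norm_num)
      _ ≤ φ^5/2 := by linarith

theorem D_taylor_at_zero (β : ℝ → ℂ)
    (hβ0 : β 0 = 0)
    (hcont : ContinuousOn β (Icc 0 π))
    (hcos : ∀ φ ∈ Icc (0 : ℝ) π, Complex.cos (β φ) =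
      1 + ((Real.cos φ : ℂ) - 1) * Complex.exp (2 * Real.pi * Complex.I / 3))
    (him : ∀ φ ∈ Ioo (0 : ℝ) π, 0 < (β φ).im) :
    (fun φ : ℝ => Complex.sin (β φ) * Complex.exp (-(Real.pi * Complex.I) / 3) -
        ((φ : ℂ) + (φ : ℂ) ^ 3 * (1 / 48 - Complex.I * (Real.sqrt 3 / 16))))
      =o[𝓝[>] 0] (fun φ : ℝ => φ ^ 3) ∧
    (fun φ : ℝ =>
        (Complex.sin (β φ) * Complex.exp (-(Real.pi * Complex.I) / 3)).re -
          (φ + φ ^ 3 / 48))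
      =o[𝓝[>] 0] (fun φ : ℝ => φ ^ 3) ∧
    (fun φ : ℝ =>
        (-(Complex.sin (β φ) * Complex.exp (-(Real.pi * Complex.I) / 3)).im) -
          Real.sqrt 3 / 16 * φ ^ 3)
      =o[𝓝[>] 0] (fun φ : ℝ => φ ^ 3) := by
  have hs3 : (0:ℝ) < Real.sqrt 3 := Real.sqrt_pos.mpr (by norm_num)
  have hs3sq : Real.sqrt 3 ^ 2 = 3 := Real.sq_sqrt (by norm_num)
  have hs3le : Real.sqrt 3 ≤ 2 := by nlinarith
  have hs3c : ((Real.sqrt 3 : ℝ) : ℂ) ^ 2 = 3 := by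
    norm_cast
  -- abbreviations (functions, stated explicitly)
  set f : ℝ → ℂ := fun φ => Complex.sin (β φ) * Complex.exp (-(Real.pi * Complex.I) / 3)
    with hfdef
  set P : ℝ → ℂ := fun φ =>
    (φ : ℂ) + (φ : ℂ) ^ 3 * (1 / 48 - Complex.I * ((Real.sqrt 3 : ℝ) / 16)) with hPdef
  -- exp values
  have hω : Complex.exp (2 * (Real.pi:ℂ) * Complex.I / 3)
      = -(1/2) + ((Real.sqrt 3 : ℝ):ℂ)/2 * Complex.I := by
    have h1 : (2 * (Real.pi:ℂ) * Complex.I / 3 : ℂ) = ((2*π/3 : ℝ):ℂ) * Complex.I := by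
      push_cast; ring
    have h2 : (2*π/3 : ℝ) = π - π/3 := by ring
    rw [h1, Complex.exp_mul_I, ← Complex.ofReal_cos, ← Complex.ofReal_sin, h2,
      Real.cos_pi_sub, Real.sin_pi_sub, Real.cos_pi_div_three, Real.sin_pi_div_three]
    push_cast; ring
  have hE : Complex.exp (-((Real.pi:ℂ) * Complex.I) / 3)
      = 1/2 - ((Real.sqrt 3 : ℝ):ℂ)/2 * Complex.I := by
    have h1 : (-((Real.pi:ℂ) * Complex.I) / 3 : ℂ) = ((-(π/3) : ℝ):ℂ) * Complex.I := by
      push_cast; ring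
    rw [h1, Complex.exp_mul_I, ← Complex.ofReal_cos, ← Complex.ofReal_sin,
      Real.cos_neg, Real.sin_neg, Real.cos_pi_div_three, Real.sin_pi_div_three]
    push_cast; ring
  -- f squared formula
  have hfsq : ∀ φ ∈ Icc (0:ℝ) π, f φ ^ 2 =
      4*((Real.sin (φ/2) : ℝ):ℂ)^2 + 2*((Real.sin (φ/2) : ℝ):ℂ)^4
        - 2*((Real.sqrt 3 : ℝ):ℂ)*((Real.sin (φ/2) : ℝ):ℂ)^4*Complex.I := by
    intro φ hφ
    have hcosφ : Real.cos φ = 1 - 2 * Real.sin (φ/2)^2 := by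
      have h2 : Real.cos φ = Real.cos (2*(φ/2)) := by rw [show 2*(φ/2) = φ by ring]
      rw [h2, Real.cos_two_mul']
      have := Real.sin_sq_add_cos_sq (φ/2)
      linarith
    have hcosc : (Real.cos φ : ℂ) = 1 - 2 * ((Real.sin (φ/2) : ℝ):ℂ)^2 := by
      rw [hcosφ]; push_cast; ring
    have hsin2 : Complex.sin (β φ) ^ 2 = 1 - Complex.cos (β φ)^2 := by
      linear_combination Complex.sin_sq_add_cos_sq (β φ)
    have step : f φ ^ 2 = (1 - Complex.cos (β φ)^2) *
        Complex.exp (-((Real.pi:ℂ) * Complex.I) / 3) ^ 2 := by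
      rw [hfdef]; simp only []
      rw [mul_pow, hsin2]
    rw [step, hcos φ hφ, hω, hE, hcosc]
    set t : ℂ := ((Real.sin (φ/2) : ℝ):ℂ)
    set s : ℂ := ((Real.sqrt 3 : ℝ):ℂ)
    linear_combination ((-3/2)*t^2*s^2 + (1/2)*t^2*s^3*Complex.I + (-3/2)*t^4*s^2
        + t^4*s^3*Complex.I + (1/4)*t^4*s^4 + (-1/4)*t^4*s^4*Complex.I^2) * Complex.I_sq
      + ((3/2)*t^2 + (-1/2)*t^2*s*Complex.I + (3/4)*t^4 + (-1)*t^4*s*Complex.I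
        + (-1/4)*t^4*s^2) * hs3c
  -- decompositions of complex sin/cos
  have hsin_decomp : ∀ z : ℂ, Complex.sin z =
      ((Real.sin z.re * Real.cosh z.im : ℝ):ℂ) + ((Real.cos z.re * Real.sinh z.im : ℝ):ℂ) * Complex.I := by
    intro z
    rw [Complex.sin_eq, ← Complex.ofReal_sin, ← Complex.ofReal_cos,
      ← Complex.ofReal_cosh, ← Complex.ofReal_sinh]
    push_cast; ring
  have hcos_decomp : ∀ z : ℂ, Complex.cos z =
      ((Real.cos z.re * Real.cosh z.im : ℝ):ℂ) - ((Real.sin z.re * Real.sinh z.im : ℝ):ℂ) * Complex.I := by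
    intro z
    rw [Complex.cos_eq, ← Complex.ofReal_sin, ← Complex.ofReal_cos,
      ← Complex.ofReal_cosh, ← Complex.ofReal_sinh]
    push_cast; ring
  -- β tends to 0 from the right
  have hβt : Tendsto β (𝓝[>] (0:ℝ)) (𝓝 0) := by
    have h0 : (0:ℝ) ∈ Icc (0:ℝ) π := ⟨le_refl _, Real.pi_pos.le⟩
    have h1 : Tendsto β (𝓝[Icc (0:ℝ) π] 0) (𝓝 0) := by
      have := hcont 0 h0
      rwa [ContinuousWithinAt, hβ0] at this
    refine h1.mono_left (nhdsWithin_le_iff.mpr ?_)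
    exact mem_of_superset (Ioo_mem_nhdsGT_of_mem ⟨le_refl _, Real.pi_pos⟩) Ioo_subset_Icc_self
  -- positivity of the real part of f
  have hRe : ∀ᶠ φ in 𝓝[>] (0:ℝ), 0 < (f φ).re := by
    have hsmall : ∀ᶠ φ in 𝓝[>] (0:ℝ), ‖β φ‖ < 1 := by
      have := Metric.tendsto_nhds.mp hβt 1 one_pos
      filter_upwards [this] with φ h
      rwa [Complex.dist_eq, sub_zero] at h
    filter_upwards [hsmall, Ioo_mem_nhdsGT_of_mem (show (0:ℝ) ∈ Ico (0:ℝ) π from ⟨le_refl _, Real.pi_pos⟩)]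
      with φ hβs hφm
    have hφΙ : φ ∈ Icc (0:ℝ) π := Ioo_subset_Icc_self hφm
    set z := β φ with hz
    have himz : 0 < z.im := him φ hφm
    have hrez : |z.re| < 1 := lt_of_le_of_lt (Complex.abs_re_le_norm z) hβs
    have hrez2 : z.re ∈ Ioo (-(π/2)) (π/2) := by
      rw [abs_lt] at hrez
      constructor <;> nlinarith [Real.pi_gt_three]
    have hcoszre : 0 < Real.cos z.re := Real.cos_pos_of_mem_Ioo hrez2
    have hsinh : 0 < Real.sinh z.im := Real.sinh_pos_iff.mpr himz
    have hcosh : 0 < Real.cosh z.im := Real.cosh_pos z.im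
    -- imaginary part of cos z from hcos
    have him_cos : (Complex.cos z).im = (Real.cos φ - 1) * (Real.sqrt 3 / 2) := by
      rw [hcos φ hφΙ, hω]
      simp [Complex.add_im, Complex.mul_im, Complex.sub_re, Complex.sub_im,
        Complex.ofReal_re, Complex.ofReal_im, Complex.cos_ofReal_re]
    have him_cos2 : (Complex.cos z).im = -(Real.sin z.re * Real.sinh z.im) := by
      rw [hcos_decomp z]
      simp [Complex.sub_im, Complex.mul_im, Complex.ofReal_re, Complex.ofReal_im,
        Complex.sin_ofReal_re, Complex.sinh_ofReal_re]
    have hcosφ1 : Real.cos φ < 1 := by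
      have hsp : 0 < Real.sin (φ/2) := Real.sin_pos_of_pos_of_lt_pi (by linarith [hφm.1])
        (by linarith [hφm.2, Real.pi_pos])
      have h2 : Real.cos φ = Real.cos (2*(φ/2)) := by rw [show 2*(φ/2) = φ by ring]
      rw [h2, Real.cos_two_mul']
      nlinarith [Real.sin_sq_add_cos_sq (φ/2), Real.neg_one_le_cos (φ/2), Real.cos_le_one (φ/2)]
    have hsinzre : 0 < Real.sin z.re := by
      have := him_cos.symm.trans him_cos2
      nlinarith
    -- real part of f
    have hfre : (f φ).re = (Real.sin z.re * Real.cosh z.im) * (1/2)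
        + (Real.cos z.re * Real.sinh z.im) * (Real.sqrt 3 / 2) := by
      rw [hfdef]
      simp only []
      rw [hE, hsin_decomp z]
      simp [Complex.mul_re, Complex.add_re, Complex.add_im, Complex.mul_im,
        Complex.sub_re, Complex.sub_im, Complex.ofReal_re, Complex.ofReal_im,
        Complex.sin_ofReal_re, Complex.cos_ofReal_re, Complex.sinh_ofReal_re,
        Complex.cosh_ofReal_re]
    rw [hfre]
    positivity
  -- quantitative bound on f^2 - P^2
  have hb : ∀ᶠ φ in 𝓝[>] (0:ℝ), ‖f φ ^ 2 - P φ ^ 2‖ ≤ φ^5 := by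
    filter_upwards [Ioo_mem_nhdsGT_of_mem (show (0:ℝ) ∈ Ico (0:ℝ) 1 from ⟨le_refl _, one_pos⟩)]
      with φ hφ
    obtain ⟨hφ0, hφ1⟩ := hφ
    have hφπ : φ < π := lt_trans hφ1 (by linarith [Real.pi_gt_three])
    have hmem : φ ∈ Icc (0:ℝ) π := ⟨hφ0.le, hφπ.le⟩
    set t := Real.sin (φ/2) with htdef
    have ht_pos : 0 < t := Real.sin_pos_of_pos_of_lt_pi (by linarith) (by nlinarith [Real.pi_gt_three])
    have ht_ub : t ≤ φ/2 := (Real.sin_lt (by linarith)).le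
    have hrb : |t - (φ/2 - (φ/2)^3/6)| ≤ |φ/2|^4 * (5/96) := by
      have h := Real.sin_bound (x := φ/2) (by rw [abs_of_pos (by linarith)]; linarith)
      have ha : |φ/2| ≤ 1 := by rw [abs_of_pos (by linarith)]; linarith
      have h4 : 0 ≤ |φ/2|^4 := by positivity
      refine le_trans h ?_
      nlinarith [pow_succ |φ/2| 4, mul_nonneg h4 (sub_nonneg.mpr ha)]
    have hr' : |t - (φ/2 - φ^3/48)| ≤ 5/1536*φ^4 := by
      have e1 : (φ/2 - (φ/2)^3/6) = φ/2 - φ^3/48 := by ring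
      have e2 : |φ/2|^4 * (5/96) = 5/1536*φ^4 := by
        rw [abs_of_pos (by linarith)]; ring
      rw [e1, e2] at hrb; exact hrb
    -- split into real and imaginary parts
    have hz : f φ ^ 2 - P φ ^ 2
        = ((4*t^2 + 2*t^4 - (φ + φ^3/48)^2 + 3*φ^6/256 : ℝ) : ℂ)
          + ((Real.sqrt 3 * (-2*t^4 + φ^4/8 + φ^6/384) : ℝ) : ℂ) * Complex.I := by
      rw [hfsq φ hmem, hPdef]
      simp only [← htdef]
      push_cast
      linear_combination ((-1/256)*((Real.sqrt 3:ℝ):ℂ)^2*((φ:ℝ):ℂ)^6) * Complex.I_sq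
        + ((1/256)*((φ:ℝ):ℂ)^6) * hs3c
    rw [hz]
    have htri : ∀ X Y : ℝ, ‖((X:ℝ):ℂ) + ((Y:ℝ):ℂ) * Complex.I‖ ≤ |X| + |Y| := by
      intro X Y
      calc ‖((X:ℝ):ℂ) + ((Y:ℝ):ℂ) * Complex.I‖
          ≤ ‖((X:ℝ):ℂ)‖ + ‖((Y:ℝ):ℂ) * Complex.I‖ := norm_add_le _ _
        _ = |X| + |Y| := by
            rw [norm_mul, Complex.norm_real, Complex.norm_real, Complex.norm_I, mul_one,
              Real.norm_eq_abs, Real.norm_eq_abs]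
    refine le_trans (htri _ _) ?_
    obtain ⟨hX, hY⟩ := D_aux_bound t φ hφ0 hφ1 ht_pos ht_ub hr'
    linarith
  -- f^2 - P^2 is little-o of φ^4
  have hlittle4 : (fun φ : ℝ => f φ ^ 2 - P φ ^ 2) =o[𝓝[>] (0:ℝ)] (fun φ : ℝ => φ ^ 4) := by
    have h54 : (fun φ:ℝ => φ^5) =o[𝓝[>] (0:ℝ)] (fun φ:ℝ => φ^4) :=
      (isLittleO_pow_pow (by norm_num)).mono nhdsWithin_le_nhds
    refine IsBigO.trans_isLittleO ?_ h54
    rw [isBigO_iff]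
    refine ⟨1, ?_⟩
    filter_upwards [hb, self_mem_nhdsWithin] with φ hφb hφp
    have hφ0 : (0:ℝ) < φ := hφp
    rw [Real.norm_eq_abs, abs_of_pos (by positivity), one_mul]
    exact hφb
  -- main little-o statement
  have hmain : (fun φ : ℝ => f φ - P φ) =o[𝓝[>] (0:ℝ)] (fun φ : ℝ => φ ^ 3) := by
    rw [isLittleO_iff]
    intro ε hε
    have h4 := isLittleO_iff.mp hlittle4 hε
    filter_upwards [h4, hRe, self_mem_nhdsWithin] with φ h4' hRe' hφp
    have hφ0 : (0:ℝ) < φ := hφp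
    have hPre : (P φ).re = φ + φ^3*(1/48) := by
      rw [hPdef]
      simp [Complex.add_re, Complex.mul_re, Complex.sub_re, Complex.sub_im,
        Complex.ofReal_re, Complex.ofReal_im, Complex.I_re, Complex.I_im,
        ← Complex.ofReal_pow]
    have hfP : φ ≤ ‖f φ + P φ‖ := by
      have h1 : φ ≤ (f φ + P φ).re := by
        rw [Complex.add_re, hPre]
        nlinarith [pow_pos hφ0 3]
      calc φ ≤ (f φ + P φ).re := h1
        _ ≤ ‖f φ + P φ‖ := Complex.re_le_norm _
        _ = ‖f φ + P φ‖ := rfl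
    have key : ‖f φ - P φ‖ * φ ≤ (ε * φ^3) * φ := by
      calc ‖f φ - P φ‖ * φ ≤ ‖f φ - P φ‖ * ‖f φ + P φ‖ :=
            mul_le_mul_of_nonneg_left hfP (norm_nonneg _)
        _ = ‖f φ ^ 2 - P φ ^ 2‖ := by
            rw [← norm_mul]; congr 1; ring
        _ ≤ ε * ‖φ^4‖ := h4'
        _ = (ε * φ^3) * φ := by
            rw [Real.norm_eq_abs, abs_of_pos (by positivity)]; ring
    have hfin : ‖f φ - P φ‖ ≤ ε * φ^3 := le_of_mul_le_mul_right key hφ0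
    rw [Real.norm_eq_abs, abs_of_pos (by positivity)]
    exact hfin
  -- assemble the three statements
  have hre_eq : ∀ φ : ℝ, (f φ).re - (φ + φ^3/48) = (f φ - P φ).re := by
    intro φ
    rw [Complex.sub_re, hPdef]
    simp [Complex.add_re, Complex.mul_re, Complex.ofReal_re, Complex.ofReal_im,
      Complex.I_re, Complex.I_im, ← Complex.ofReal_pow]
    ring
  have him_eq : ∀ φ : ℝ, (-(f φ).im) - Real.sqrt 3/16*φ^3 = -(f φ - P φ).im := by
    intro φ
    rw [Complex.sub_im, hPdef]
    simp [Complex.add_im, Complex.mul_im, Complex.ofReal_re, Complex.ofReal_im,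
      Complex.I_re, Complex.I_im, ← Complex.ofReal_pow]
    ring
  refine ⟨hmain, ?_, ?_⟩
  · have hO : (fun φ : ℝ => (f φ).re - (φ + φ^3/48)) =O[𝓝[>] (0:ℝ)]
        (fun φ : ℝ => f φ - P φ) := by
      refine isBigO_of_le _ (fun φ => ?_)
      rw [hre_eq φ, Real.norm_eq_abs]
      exact Complex.abs_re_le_norm _
    exact hO.trans_isLittleO hmain
  · have hO : (fun φ : ℝ => (-(f φ).im) - Real.sqrt 3/16*φ^3) =O[𝓝[>] (0:ℝ)]
        (fun φ : ℝ => f φ - P φ) := by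
      refine isBigO_of_le _ (fun φ => ?_)
      rw [him_eq φ, Real.norm_eq_abs, abs_neg]
      exact Complex.abs_im_le_norm _
    exact hO.trans_isLittleO hmain
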